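/- arXiv:2407.05356 — 3 statements merged into one kernel-verified Lean document; each statement's English description precedes it below -/
import Mathlib

section
/- Let $U$ be a compact metric space. Define the affine map $\mathscr{P} : \mathcal{P}_2(\mathbb{R}^n \times \mathcal{P}(U)) \to \mathcal{P}_2(\mathbb{R}^n \times U)$ by $\mathscr{P}(\xi)(A \times B) = \int_{\mathbb{R}^n \times \mathcal{P}(U)} \mathbf{1}_A(x)\, q(B)\, \xi(\mathrm{d}x, \mathrm{d}q)$. Then $\mathscr{P}$ is 1-Lipschitz when the domain carries the Kantorovich–Rubinstein metric $d_{\mathrm{KR}}(\xi_1,\xi_2) = \sup_{f \in \mathrm{Lip}_1} \int f\, \mathrm{d}(\xi_1 - \xi_2)$ and the codomain carries the Fortet–Mourier metric. Consequently, if $h : \mathcal{P}_2(\mathbb{R}^n \times U) \to \mathbb{R}$ is Lipschitz continuous, then its extension $\tilde h := h \circ \mathscr{P}$ is Lipschitz continuous on $\mathcal{P}_2(\mathbb{R}^n \times \mathcal{P}(U))$. -/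
open MeasureTheory

noncomputable instance {U : Type*} [MeasurableSpace U] :
    MeasurableSpace (ProbabilityMeasure U) :=
  Subtype.instMeasurableSpace

/-- The Fortet–Mourier distance between probability measures on `U`. -/
noncomputable def fmDistP {U : Type*} [MetricSpace U] [MeasurableSpace U]
    (q₁ q₂ : ProbabilityMeasure U) : ℝ :=
  sSup {r : ℝ | ∃ g : U → ℝ, LipschitzWith 1 g ∧ (∀ u, |g u| ≤ 1) ∧
    r = (∫ u, g u ∂(q₁ : Measure U)) - ∫ u, g u ∂(q₂ : Measure U)}

set_option linter.unusedSectionVars false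
section helpers

variable {U : Type*} [MetricSpace U] [CompactSpace U] [MeasurableSpace U] [BorelSpace U]

lemma bdd_cont_integrable (q : ProbabilityMeasure U) {g : U → ℝ} (hc : Continuous g)
    (hb : ∀ u, |g u| ≤ 1) : Integrable g (q : Measure U) :=
  Integrable.mono' (integrable_const 1) hc.aestronglyMeasurable
    (Filter.Eventually.of_forall fun u => by simpa [Real.norm_eq_abs] using hb u)

lemma abs_integral_le_one (q : ProbabilityMeasure U) {g : U → ℝ}
    (hb : ∀ u, |g u| ≤ 1) : |∫ u, g u ∂(q : Measure U)| ≤ 1 := by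
  have := norm_integral_le_of_norm_le_const (μ := (q : Measure U)) (f := g) (C := 1)
    (Filter.Eventually.of_forall fun u => by simpa [Real.norm_eq_abs] using hb u)
  simpa [Real.norm_eq_abs, measure_univ] using this

lemma fmDistP_bddAbove (q₁ q₂ : ProbabilityMeasure U) :
    BddAbove {r : ℝ | ∃ g : U → ℝ, LipschitzWith 1 g ∧ (∀ u, |g u| ≤ 1) ∧
      r = (∫ u, g u ∂(q₁ : Measure U)) - ∫ u, g u ∂(q₂ : Measure U)} := by
  refine ⟨2, ?_⟩
  rintro r ⟨g, hg, hb, rfl⟩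
  have h1 := abs_integral_le_one q₁ hb
  have h2 := abs_integral_le_one q₂ hb
  have := abs_sub_abs_le_abs_sub (∫ u, g u ∂(q₁ : Measure U)) (∫ u, g u ∂(q₂ : Measure U))
  cases' abs_le.1 h1 with h1a h1b
  cases' abs_le.1 h2 with h2a h2b
  linarith

lemma zero_mem_fmSet (q₁ q₂ : ProbabilityMeasure U) :
    (0:ℝ) ∈ {r : ℝ | ∃ g : U → ℝ, LipschitzWith 1 g ∧ (∀ u, |g u| ≤ 1) ∧
      r = (∫ u, g u ∂(q₁ : Measure U)) - ∫ u, g u ∂(q₂ : Measure U)} :=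
  ⟨fun _ => 0, (LipschitzWith.const 0).weaken zero_le_one, fun _ => by simp, by simp⟩

lemma fmDistP_nonneg (q₁ q₂ : ProbabilityMeasure U) : 0 ≤ fmDistP q₁ q₂ :=
  le_csSup (fmDistP_bddAbove q₁ q₂) (zero_mem_fmSet q₁ q₂)

lemma fmDistP_le_two (q₁ q₂ : ProbabilityMeasure U) : fmDistP q₁ q₂ ≤ 2 := by
  apply Real.sSup_le _ (by norm_num)
  rintro r ⟨g, hg, hb, rfl⟩
  have h1 := abs_integral_le_one q₁ hb
  have h2 := abs_integral_le_one q₂ hb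
  cases' abs_le.1 h1 with h1a h1b
  cases' abs_le.1 h2 with h2a h2b
  linarith

lemma abs_integral_sub_le_fmDistP (q₁ q₂ : ProbabilityMeasure U) {g : U → ℝ}
    (hg : LipschitzWith 1 g) (hb : ∀ u, |g u| ≤ 1) :
    |(∫ u, g u ∂(q₁ : Measure U)) - ∫ u, g u ∂(q₂ : Measure U)| ≤ fmDistP q₁ q₂ := by
  rw [abs_sub_le_iff]
  constructor
  · exact le_csSup (fmDistP_bddAbove q₁ q₂) ⟨g, hg, hb, rfl⟩
  · refine le_csSup (fmDistP_bddAbove q₁ q₂) ⟨fun u => -g u, ?_, fun u => by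
      simpa using hb u, by rw [integral_neg, integral_neg]; ring⟩
    exact hg.neg

lemma fmDistP_self (q : ProbabilityMeasure U) : fmDistP q q = 0 := by
  refine le_antisymm (Real.sSup_le ?_ le_rfl) (fmDistP_nonneg q q)
  rintro r ⟨g, hg, hb, rfl⟩
  simp

end helpers

set_option linter.unusedSectionVars false
section net

open MeasureTheory Metric Set

universe u
variable {U : Type u} [MetricSpace U] [CompactSpace U]

lemma exists_net (ε : ℝ) (hε : 0 < ε) :
    ∃ (ι : Type u) (_ : Fintype ι) (t : ι → U → ℝ),
      (∀ i, LipschitzWith 1 (t i)) ∧ (∀ i u, |t i u| ≤ 1) ∧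
      ∀ g : U → ℝ, LipschitzWith 1 g → (∀ u, |g u| ≤ 1) →
        ∃ i, ∀ u, |g u - t i u| ≤ ε := by
  classical
  obtain ⟨s, -, hsfin, hcover⟩ :=
    finite_cover_balls_of_compact (isCompact_univ (X := U)) (show 0 < ε/4 by linarith)
  haveI : Fintype ↥s := hsfin.fintype
  set G : Set (U → ℝ) := {g | LipschitzWith 1 g ∧ ∀ u, |g u| ≤ 1} with hG
  set Ψ : (U → ℝ) → (↥s → ℝ) := fun g v => g v.1 with hΨ
  have hsubK : Ψ '' G ⊆ Set.univ.pi (fun _ : ↥s => Icc (-1:ℝ) 1) := by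
    rintro _ ⟨g, hg, rfl⟩ v -
    exact abs_le.1 (hg.2 v.1)
  have htb : TotallyBounded (Ψ '' G) :=
    ((isCompact_univ_pi fun _ => isCompact_Icc).totallyBounded).subset hsubK
  obtain ⟨N, hNsub, hNfin, hNcover⟩ :=
    EMetric.totallyBounded_iff'.1 htb (ENNReal.ofReal (ε/4))
      (by simp [ENNReal.ofReal_pos]; linarith)
  haveI : Fintype ↥N := hNfin.fintype
  refine ⟨↥N, inferInstance, fun i => (hNsub i.2).choose, ?_, ?_, ?_⟩
  · exact fun i => (hNsub i.2).choose_spec.1.1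
  · exact fun i => (hNsub i.2).choose_spec.1.2
  · intro g hg hb
    have hgG : g ∈ G := ⟨hg, hb⟩
    have : Ψ g ∈ ⋃ y ∈ N, EMetric.ball y (ENNReal.ofReal (ε/4)) :=
      hNcover (Set.mem_image_of_mem Ψ hgG)
    obtain ⟨y, hyN, hy⟩ := Set.mem_iUnion₂.1 this
    refine ⟨⟨y, hyN⟩, fun u => ?_⟩
    set g' : U → ℝ := (hNsub hyN).choose with hg'
    have hspec := (hNsub hyN).choose_spec
    have hdist : dist (Ψ g) (Ψ g') < ε/4 := by
      rw [← hspec.2] at hy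
      exact edist_lt_ofReal.1 hy
    obtain ⟨v, hvs, hv⟩ := Set.mem_iUnion₂.1 (hcover (Set.mem_univ u))
    have hcoord : |g v - g' v| < ε/4 := by
      have := dist_le_pi_dist (Ψ g) (Ψ g') ⟨v, hvs⟩
      rw [Real.dist_eq] at this
      exact lt_of_le_of_lt this hdist
    have h1 : |g u - g v| ≤ ε/4 := by
      have := hg.dist_le_mul u v
      rw [Real.dist_eq] at this
      simpa using this.trans (by rw [NNReal.coe_one, one_mul]; exact le_of_lt hv)
    have h2 : |g' v - g' u| ≤ ε/4 := by
      have := hspec.1.1.dist_le_mul v u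
      rw [Real.dist_eq] at this
      refine this.trans ?_
      rw [NNReal.coe_one, one_mul, dist_comm]
      exact le_of_lt hv
    calc |g u - g' u| ≤ |g u - g v| + |g v - g' v| + |g' v - g' u| := by
          have := abs_sub_le (g u) (g v) (g' u)
          have := abs_sub_le (g v) (g' v) (g' u)
          linarith [abs_sub_le (g u) (g v) (g' u), abs_sub_le (g v) (g' v) (g' u)]
      _ ≤ ε/4 + ε/4 + ε/4 := by linarith [le_of_lt hcoord]
      _ ≤ ε := by linarith

end net

section meas

open MeasureTheory Metric Set Filter

variable {U : Type u} [MetricSpace U] [CompactSpace U] [MeasurableSpace U] [BorelSpace U]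

lemma measurable_integral_param {g : U → ℝ} (hc : Continuous g) (hb : ∀ u, |g u| ≤ 1) :
    Measurable fun q : ProbabilityMeasure U => ∫ u, g u ∂(q : Measure U) := by
  have key : ∀ q : ProbabilityMeasure U, ∫ u, g u ∂(q : Measure U)
      = (∫⁻ u, ENNReal.ofReal (g u) ∂(q : Measure U)).toReal
        - (∫⁻ u, ENNReal.ofReal (-g u) ∂(q : Measure U)).toReal := fun q =>
    integral_eq_lintegral_pos_part_sub_lintegral_neg_part (bdd_cont_integrable q hc hb)
  simp_rw [key]
  refine Measurable.sub ?_ ?_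
  · exact ((Measure.measurable_lintegral
      (ENNReal.measurable_ofReal.comp hc.measurable)).comp measurable_subtype_coe).ennreal_toReal
  · exact ((Measure.measurable_lintegral
      (ENNReal.measurable_ofReal.comp hc.neg.measurable)).comp
        measurable_subtype_coe).ennreal_toReal

lemma fmDistP_le_of_coords {ε : ℝ} (hε : 0 < ε) {ι : Type u} (t : ι → U → ℝ)
    (htl : ∀ i, LipschitzWith 1 (t i)) (htb : ∀ i u, |t i u| ≤ 1)
    (hnet : ∀ g : U → ℝ, LipschitzWith 1 g → (∀ u, |g u| ≤ 1) →
      ∃ i, ∀ u, |g u - t i u| ≤ ε)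
    (q q' : ProbabilityMeasure U)
    (hco : ∀ i, |(∫ u, t i u ∂(q : Measure U)) - ∫ u, t i u ∂(q' : Measure U)| ≤ ε) :
    fmDistP q q' ≤ 3 * ε := by
  apply Real.sSup_le _ (by linarith)
  rintro r ⟨g, hg, hgb, rfl⟩
  obtain ⟨i, hi⟩ := hnet g hg hgb
  have hgq : Integrable g (q : Measure U) := bdd_cont_integrable q hg.continuous hgb
  have hgq' : Integrable g (q' : Measure U) := bdd_cont_integrable q' hg.continuous hgb
  have htq : Integrable (t i) (q : Measure U) :=
    bdd_cont_integrable q (htl i).continuous (htb i)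
  have htq' : Integrable (t i) (q' : Measure U) :=
    bdd_cont_integrable q' (htl i).continuous (htb i)
  have h1 : ∫ u, g u ∂(q : Measure U) ≤ (∫ u, t i u ∂(q : Measure U)) + ε := by
    have : ∫ u, g u ∂(q : Measure U) ≤ ∫ u, (t i u + ε) ∂(q : Measure U) :=
      integral_mono hgq (htq.add (integrable_const ε))
        (fun u => by have := abs_le.1 (hi u); linarith [this.2])
    simpa [integral_add htq (integrable_const ε), measure_univ] using this
  have h2 : (∫ u, t i u ∂(q' : Measure U)) - ε ≤ ∫ u, g u ∂(q' : Measure U) := by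
    have : ∫ u, (t i u - ε) ∂(q' : Measure U) ≤ ∫ u, g u ∂(q' : Measure U) :=
      integral_mono (htq'.sub (integrable_const ε)) hgq'
        (fun u => by have := abs_le.1 (hi u); linarith [this.1])
    simpa [integral_sub htq' (integrable_const ε), measure_univ] using this
  have h3 := abs_le.1 (hco i)
  linarith [h3.1, h3.2]

end meas

section big

open MeasureTheory Metric Set Filter Topology

variable {U : Type u} [MetricSpace U] [CompactSpace U] [MeasurableSpace U] [BorelSpace U]

lemma measurable_of_fm_lipschitz {n : ℕ} [Nonempty (ProbabilityMeasure U)]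
    (f : EuclideanSpace ℝ (Fin n) × ProbabilityMeasure U → ℝ)
    (hf : ∀ x₁ x₂ q₁ q₂, |f (x₁, q₁) - f (x₂, q₂)| ≤ dist x₁ x₂ + fmDistP q₁ q₂) :
    Measurable f := by
  classical
  have H : ∀ m : ℕ, ∃ fm : EuclideanSpace ℝ (Fin n) × ProbabilityMeasure U → ℝ,
      Measurable fm ∧ ∀ p, dist (fm p) (f p) ≤ 3 * (1 / ((m : ℝ) + 1)) := by
    intro m
    set ε : ℝ := 1 / ((m : ℝ) + 1) with hεdef
    have hε : 0 < ε := by positivity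
    obtain ⟨ι, hιF, t, htl, htb, hnet⟩ := exists_net (U := U) ε hε
    haveI := hιF
    set Φ : ProbabilityMeasure U → ι → ℝ := fun q i => ∫ u, t i u ∂(q : Measure U) with hΦdef
    have hΦ : Measurable Φ := measurable_pi_lambda _ fun i =>
      measurable_integral_param (htl i).continuous (htb i)
    set cell : ProbabilityMeasure U → ι → ℤ := fun q i => ⌊(Φ q i)/ε⌋ with hcelldef
    have hcell : Measurable cell := measurable_pi_lambda _ fun i =>
      (((measurable_pi_apply i).comp hΦ).div_const ε).floor
    set rep : (ι → ℤ) → ProbabilityMeasure U := fun z =>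
      if h : ∃ q, cell q = z then h.choose else Classical.arbitrary _ with hrepdef
    have hkey : ∀ q, fmDistP (rep (cell q)) q ≤ 3 * ε := by
      intro q
      have hex : ∃ q', cell q' = cell q := ⟨q, rfl⟩
      have hrep : cell (rep (cell q)) = cell q := by
        simp only [hrepdef, dif_pos hex]
        exact hex.choose_spec
      refine fmDistP_le_of_coords hε t htl htb hnet _ _ ?_
      intro i
      have hfl : ⌊(Φ (rep (cell q)) i)/ε⌋ = ⌊(Φ q i)/ε⌋ := congrFun hrep i
      set a := Φ (rep (cell q)) i with ha
      set b := Φ q i with hb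
      have fa := Int.floor_le (a/ε)
      have fa' := Int.lt_floor_add_one (a/ε)
      have fb := Int.floor_le (b/ε)
      have fb' := Int.lt_floor_add_one (b/ε)
      rw [hfl] at fa fa'
      have habs : |a/ε - b/ε| ≤ 1 := by
        rw [abs_le]; constructor <;> linarith
      rw [div_sub_div_same, abs_div, abs_of_pos hε, div_le_one hε] at habs
      exact habs
    haveI msc : MeasurableSingletonClass (ι → ℤ) := by
      refine ⟨fun z => ?_⟩
      have : ({z} : Set (ι → ℤ)) = ⋂ i, (fun w : ι → ℤ => w i) ⁻¹' {z i} := by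
        ext w; simp [funext_iff]
      rw [this]
      exact MeasurableSet.iInter fun i => (measurable_pi_apply i) (measurableSet_singleton _)
    set F : EuclideanSpace ℝ (Fin n) × (ι → ℤ) → ℝ := fun y => f (y.1, rep y.2) with hFdef
    have hF : Measurable F := by
      refine measurable_from_prod_countable_left fun z => ?_
      have hlip : LipschitzWith 1 (fun x : EuclideanSpace ℝ (Fin n) => f (x, rep z)) := by
        refine LipschitzWith.of_dist_le_mul fun x x' => ?_
        have := hf x x' (rep z) (rep z)
        rw [fmDistP_self] at this
        calc dist (f (x, rep z)) (f (x', rep z)) = |f (x, rep z) - f (x', rep z)| :=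
              Real.dist_eq _ _
          _ ≤ dist x x' + 0 := this
          _ = 1 * dist x x' := by ring
      exact hlip.continuous.measurable
    refine ⟨fun p => F (p.1, cell p.2), hF.comp (measurable_fst.prodMk
      (hcell.comp measurable_snd)), fun p => ?_⟩
    have h1 : dist (F (p.1, cell p.2)) (f p) = |f (p.1, rep (cell p.2)) - f (p.1, p.2)| := by
      rw [Real.dist_eq]
    rw [h1]
    calc |f (p.1, rep (cell p.2)) - f (p.1, p.2)|
        ≤ dist p.1 p.1 + fmDistP (rep (cell p.2)) p.2 := hf _ _ _ _
      _ ≤ 0 + 3 * ε := by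
          rw [dist_self]
          exact add_le_add_right (hkey p.2) 0
      _ = 3 * (1 / ((m : ℝ) + 1)) := by rw [zero_add, hεdef]
  choose fm hfm hdist using H
  refine measurable_of_tendsto_metrizable hfm ?_
  rw [tendsto_pi_nhds]
  intro p
  refine tendsto_iff_dist_tendsto_zero.mpr ?_
  have hlim : Tendsto (fun m : ℕ => 3 * (1 / ((m : ℝ) + 1))) atTop (𝓝 0) := by
    have := tendsto_one_div_add_atTop_nhds_zero_nat.const_mul (3 : ℝ)
    simpa using this
  exact squeeze_zero (fun m => dist_nonneg) (fun m => hdist m p) hlim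

end big

/-- The Fortet–Mourier distance between measures on `ℝⁿ × U`
(test functions are `1`-Lipschitz for the sum metric, bounded by `1`). -/
noncomputable def fmDistK {n : ℕ} {U : Type*} [MetricSpace U] [MeasurableSpace U]
    (ρ₁ ρ₂ : Measure (EuclideanSpace ℝ (Fin n) × U)) : ℝ :=
  sSup {r : ℝ | ∃ f : EuclideanSpace ℝ (Fin n) × U → ℝ,
    (∀ x₁ x₂ u₁ u₂, |f (x₁, u₁) - f (x₂, u₂)| ≤ dist x₁ x₂ + dist u₁ u₂) ∧
    (∀ p, |f p| ≤ 1) ∧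
    r = (∫ p, f p ∂ρ₁) - ∫ p, f p ∂ρ₂}

/-- The Kantorovich–Rubinstein distance between measures on `ℝⁿ × 𝒫(U)`:
the supremum over test functions that are `1`-Lipschitz for the metric
`|x₁ - x₂| + ‖q₁ - q₂‖_{U,FM}`. -/
noncomputable def dKRV {n : ℕ} {U : Type*} [MetricSpace U] [MeasurableSpace U]
    (ξ₁ ξ₂ : Measure (EuclideanSpace ℝ (Fin n) × ProbabilityMeasure U)) : ℝ :=
  sSup {r : ℝ | ∃ f : EuclideanSpace ℝ (Fin n) × ProbabilityMeasure U → ℝ,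
    (∀ x₁ x₂ q₁ q₂, |f (x₁, q₁) - f (x₂, q₂)| ≤ dist x₁ x₂ + fmDistP q₁ q₂) ∧
    r = (∫ p, f p ∂ξ₁) - ∫ p, f p ∂ξ₂}

/-- the affine averaging map `𝒫 : 𝒫₂(ℝⁿ × 𝒫(U)) → 𝒫₂(ℝⁿ × U)` is
`1`-Lipschitz from the Kantorovich–Rubinstein metric to the Fortet–Mourier metric;
consequently any Lipschitz `h` induces a Lipschitz extension `h̃ = h ∘ 𝒫`.
Here `ρᵢ = 𝒫(ξᵢ)` is characterized via bounded continuous test functions. -/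
theorem stmt1 {n : ℕ} {U : Type*} [MetricSpace U] [CompactSpace U]
    [MeasurableSpace U] [BorelSpace U]
    (ξ₁ ξ₂ : Measure (EuclideanSpace ℝ (Fin n) × ProbabilityMeasure U))
    [IsProbabilityMeasure ξ₁] [IsProbabilityMeasure ξ₂]
    (hξ₁2 : Integrable (fun p => ‖p.1‖ ^ 2) ξ₁) (hξ₂2 : Integrable (fun p => ‖p.1‖ ^ 2) ξ₂)
    (ρ₁ ρ₂ : Measure (EuclideanSpace ℝ (Fin n) × U))
    [IsProbabilityMeasure ρ₁] [IsProbabilityMeasure ρ₂]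
    (hρ₁ : ∀ f : EuclideanSpace ℝ (Fin n) × U → ℝ, Continuous f → (∀ p, |f p| ≤ 1) →
      ∫ p, f p ∂ρ₁ = ∫ p, (∫ u, f (p.1, u) ∂(p.2 : Measure U)) ∂ξ₁)
    (hρ₂ : ∀ f : EuclideanSpace ℝ (Fin n) × U → ℝ, Continuous f → (∀ p, |f p| ≤ 1) →
      ∫ p, f p ∂ρ₂ = ∫ p, (∫ u, f (p.1, u) ∂(p.2 : Measure U)) ∂ξ₂) :
    fmDistK ρ₁ ρ₂ ≤ dKRV ξ₁ ξ₂ ∧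
    ∀ (L : ℝ) (h : Measure (EuclideanSpace ℝ (Fin n) × U) → ℝ), 0 ≤ L →
      (∀ ρ ρ' : Measure (EuclideanSpace ℝ (Fin n) × U), IsProbabilityMeasure ρ →
        IsProbabilityMeasure ρ' → |h ρ - h ρ'| ≤ L * fmDistK ρ ρ') →
      |h ρ₁ - h ρ₂| ≤ L * dKRV ξ₁ ξ₂ := by
  classical
  haveI hne : Nonempty (EuclideanSpace ℝ (Fin n) × ProbabilityMeasure U) := by
    by_contra h
    rw [not_nonempty_iff] at h
    have h1 : ξ₁ Set.univ = 1 := measure_univ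
    rw [Set.univ_eq_empty_iff.2 h] at h1
    simp at h1
  haveI hneQ : Nonempty (ProbabilityMeasure U) := ⟨hne.some.2⟩
  have hnormint : ∀ (ξ : Measure (EuclideanSpace ℝ (Fin n) × ProbabilityMeasure U)),
      IsProbabilityMeasure ξ → Integrable (fun p => ‖p.1‖ ^ 2) ξ →
      Integrable (fun p : EuclideanSpace ℝ (Fin n) × ProbabilityMeasure U => ‖p.1‖ + 2) ξ := by
    intro ξ hprob h2
    haveI := hprob
    have h1 : Integrable (fun p : EuclideanSpace ℝ (Fin n) × ProbabilityMeasure U => ‖p.1‖) ξ := by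
      refine Integrable.mono' ((integrable_const (1:ℝ)).add h2)
        measurable_fst.norm.aestronglyMeasurable (Filter.Eventually.of_forall fun p => ?_)
      simp only [Pi.add_apply]
      rw [Real.norm_eq_abs, abs_of_nonneg (norm_nonneg _)]
      nlinarith [norm_nonneg p.1, sq_nonneg (‖p.1‖ - 1)]
    exact h1.add (integrable_const 2)
  have hbdd : BddAbove {r : ℝ | ∃ f : EuclideanSpace ℝ (Fin n) × ProbabilityMeasure U → ℝ,
      (∀ x₁ x₂ q₁ q₂, |f (x₁, q₁) - f (x₂, q₂)| ≤ dist x₁ x₂ + fmDistP q₁ q₂) ∧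
      r = (∫ p, f p ∂ξ₁) - ∫ p, f p ∂ξ₂} := by
    refine ⟨(∫ p, (‖p.1‖ + 2) ∂ξ₁) + ∫ p, (‖p.1‖ + 2) ∂ξ₂, ?_⟩
    rintro r ⟨f, hfl, rfl⟩
    have hfm : Measurable f := measurable_of_fm_lipschitz f hfl
    obtain ⟨q₀⟩ := hneQ
    set c : ℝ := f (0, q₀) with hc
    have hb : ∀ p : EuclideanSpace ℝ (Fin n) × ProbabilityMeasure U,
        |f p - c| ≤ ‖p.1‖ + 2 := by
      intro p
      have h1 : |f (p.1, p.2) - f (0, q₀)| ≤ dist p.1 0 + fmDistP p.2 q₀ := hfl _ _ _ _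
      rw [dist_zero_right] at h1
      have h2 := fmDistP_le_two p.2 q₀
      exact h1.trans (by linarith)
    have hfint : ∀ (ξ : Measure (EuclideanSpace ℝ (Fin n) × ProbabilityMeasure U)),
        IsProbabilityMeasure ξ → Integrable (fun p => ‖p.1‖ ^ 2) ξ → Integrable f ξ := by
      intro ξ hprob h2
      haveI := hprob
      refine Integrable.mono' ((hnormint ξ hprob h2).add (integrable_const |c|))
        hfm.aestronglyMeasurable (Filter.Eventually.of_forall fun p => ?_)
      simp only [Pi.add_apply]
      rw [Real.norm_eq_abs]
      have h3 := hb p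
      have h4 := abs_sub_abs_le_abs_sub (f p) c
      linarith
    have hfint1 := hfint ξ₁ inferInstance hξ₁2
    have hfint2 := hfint ξ₂ inferInstance hξ₂2
    have i1 : ∫ p, (f p - c) ∂ξ₁ = (∫ p, f p ∂ξ₁) - c := by
      rw [integral_sub hfint1 (integrable_const c), integral_const]
      simp [measure_univ]
    have i2 : ∫ p, (f p - c) ∂ξ₂ = (∫ p, f p ∂ξ₂) - c := by
      rw [integral_sub hfint2 (integrable_const c), integral_const]
      simp [measure_univ]
    have b1 : ∫ p, (f p - c) ∂ξ₁ ≤ ∫ p, (‖p.1‖ + 2) ∂ξ₁ :=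
      integral_mono (hfint1.sub (integrable_const c)) (hnormint ξ₁ inferInstance hξ₁2)
        (fun p => (le_abs_self _).trans (hb p))
    have b2 : -∫ p, (f p - c) ∂ξ₂ ≤ ∫ p, (‖p.1‖ + 2) ∂ξ₂ := by
      rw [← integral_neg]
      refine integral_mono ((hfint2.sub (integrable_const c)).neg)
        (hnormint ξ₂ inferInstance hξ₂2) (fun p => ?_)
      have h3 := hb p
      have h4 := neg_abs_le (f p - c)
      simp only [Pi.neg_apply]
      linarith
    show (∫ p, f p ∂ξ₁) - ∫ p, f p ∂ξ₂ ≤ _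
    linarith
  have h0mem : (0:ℝ) ∈ {r : ℝ | ∃ f : EuclideanSpace ℝ (Fin n) × ProbabilityMeasure U → ℝ,
      (∀ x₁ x₂ q₁ q₂, |f (x₁, q₁) - f (x₂, q₂)| ≤ dist x₁ x₂ + fmDistP q₁ q₂) ∧
      r = (∫ p, f p ∂ξ₁) - ∫ p, f p ∂ξ₂} :=
    ⟨fun _ => (0:ℝ), fun x₁ x₂ q₁ q₂ => by
      simpa using add_nonneg dist_nonneg (fmDistP_nonneg q₁ q₂), by simp⟩
  have part1 : fmDistK ρ₁ ρ₂ ≤ dKRV ξ₁ ξ₂ := by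
    unfold fmDistK dKRV
    apply Real.sSup_le _ (le_csSup hbdd h0mem)
    rintro r ⟨f, hfl, hfb, rfl⟩
    have hfc : Continuous f := by
      have hlip : LipschitzWith 2 f := by
        refine LipschitzWith.of_dist_le_mul fun p p' => ?_
        have hd1 : dist p.1 p'.1 ≤ dist p p' := by
          rw [Prod.dist_eq]; exact le_max_left _ _
        have hd2 : dist p.2 p'.2 ≤ dist p p' := by
          rw [Prod.dist_eq]; exact le_max_right _ _
        have h1 : |f (p.1, p.2) - f (p'.1, p'.2)| ≤ dist p.1 p'.1 + dist p.2 p'.2 := hfl _ _ _ _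
        rw [Real.dist_eq]
        push_cast
        linarith
      exact hlip.continuous
    have hxcont : ∀ x : EuclideanSpace ℝ (Fin n), Continuous fun u => f (x, u) :=
      fun x => hfc.comp (Continuous.prodMk_right x)
    have hxbd : ∀ x u, |f (x, u)| ≤ 1 := fun x u => hfb (x, u)
    set F : EuclideanSpace ℝ (Fin n) × ProbabilityMeasure U → ℝ :=
      fun p => ∫ u, f (p.1, u) ∂(p.2 : Measure U) with hFdef
    have hFlip : ∀ x₁ x₂ q₁ q₂, |F (x₁, q₁) - F (x₂, q₂)| ≤ dist x₁ x₂ + fmDistP q₁ q₂ := by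
      intro x₁ x₂ q₁ q₂
      have int1 : Integrable (fun u => f (x₁, u)) (q₁ : Measure U) :=
        bdd_cont_integrable q₁ (hxcont x₁) (hxbd x₁)
      have int2 : Integrable (fun u => f (x₂, u)) (q₁ : Measure U) :=
        bdd_cont_integrable q₁ (hxcont x₂) (hxbd x₂)
      have hA : |F (x₁, q₁) - F (x₂, q₁)| ≤ dist x₁ x₂ := by
        have he : F (x₁, q₁) - F (x₂, q₁) = ∫ u, (f (x₁, u) - f (x₂, u)) ∂(q₁ : Measure U) :=
          (integral_sub int1 int2).symm
        rw [he]
        have hn := norm_integral_le_of_norm_le_const (μ := (q₁ : Measure U))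
          (f := fun u => f (x₁, u) - f (x₂, u)) (C := dist x₁ x₂)
          (Filter.Eventually.of_forall fun u => by
            rw [Real.norm_eq_abs]
            have := hfl x₁ x₂ u u
            simpa [dist_self] using this)
        simpa [Real.norm_eq_abs, measure_univ] using hn
      have hB : |F (x₂, q₁) - F (x₂, q₂)| ≤ fmDistP q₁ q₂ := by
        have hlip2 : LipschitzWith 1 fun u => f (x₂, u) := by
          refine LipschitzWith.of_dist_le_mul fun u u' => ?_
          rw [Real.dist_eq]
          have := hfl x₂ x₂ u u'
          simpa [dist_self] using this
        exact abs_integral_sub_le_fmDistP q₁ q₂ hlip2 (hxbd x₂)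
      calc |F (x₁, q₁) - F (x₂, q₂)|
          ≤ |F (x₁, q₁) - F (x₂, q₁)| + |F (x₂, q₁) - F (x₂, q₂)| := abs_sub_le _ _ _
        _ ≤ dist x₁ x₂ + fmDistP q₁ q₂ := add_le_add hA hB
    have hrw : (∫ p, f p ∂ρ₁) - ∫ p, f p ∂ρ₂ = (∫ p, F p ∂ξ₁) - ∫ p, F p ∂ξ₂ := by
      rw [hρ₁ f hfc hfb, hρ₂ f hfc hfb]
    rw [hrw]
    exact le_csSup hbdd ⟨F, hFlip, rfl⟩
  refine ⟨part1, fun L h hL hlip => ?_⟩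
  calc |h ρ₁ - h ρ₂| ≤ L * fmDistK ρ₁ ρ₂ := hlip ρ₁ ρ₂ inferInstance inferInstance
    _ ≤ L * dKRV ξ₁ ξ₂ := mul_le_mul_of_nonneg_left part1 hL
end

section
/- Consider the Riccati ODE on $[0,T]$: $\dot\beta_t + \sigma^2 \beta_t - \frac{b_3^2\, \beta_t^2}{1 + \Gamma \beta_t} = 0$ with terminal condition $\beta_T = c$, where $\sigma, b_3 \in \mathbb{R}$, $\Gamma := \int_Z \gamma^2(z)\,\lambda(\mathrm{d}z) \ge 0$, and $c \ge 0$. Then this ODE admits a unique continuously differentiable solution $\beta : [0,T] \to \mathbb{R}$ satisfying $\beta_t \ge 0$ and $1 + \Gamma\beta_t > 0$ for all $t \in [0,T]$. -/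
open MeasureTheory

namespace Stmt11Aux

/-- The Riccati vector field. -/
noncomputable def Fr (G s3 b3 x : ℝ) : ℝ := -(s3 * x) + b3 ^ 2 * x ^ 2 / (1 + G * x)

/-- Clamp to `[0, A]`. -/
noncomputable def clampR (A x : ℝ) : ℝ := max 0 (min x A)

/-- The clamped vector field. -/
noncomputable def Gr (G s3 b3 A x : ℝ) : ℝ := Fr G s3 b3 (clampR A x)

lemma clampR_mem {A : ℝ} (hA : 0 ≤ A) (x : ℝ) : clampR A x ∈ Set.Icc (0:ℝ) A :=
  ⟨le_max_left _ _, max_le hA (min_le_right _ _)⟩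

lemma clampR_eq {A x : ℝ} (hx : x ∈ Set.Icc (0:ℝ) A) : clampR A x = x := by
  simp [clampR, min_eq_left hx.2, max_eq_right hx.1]

lemma clampR_of_nonpos {A x : ℝ} (hA : 0 ≤ A) (hx : x ≤ 0) : clampR A x = 0 := by
  simp [clampR, min_eq_left (hx.trans hA), max_eq_left hx]

lemma clampR_le_self {A x : ℝ} (hx : 0 ≤ x) : clampR A x ≤ x :=
  max_le hx (min_le_left _ _)

lemma clampR_lip (A x y : ℝ) : |clampR A x - clampR A y| ≤ |x - y| := by
  have h1 := abs_max_sub_max_le_max (0:ℝ) (min x A) 0 (min y A)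
  have h2 := abs_min_sub_min_le_max x A y A
  rw [sub_self, abs_zero] at h1 h2
  have h2' : |min x A - min y A| ≤ |x - y| := h2.trans (max_le le_rfl (abs_nonneg _))
  exact h1.trans (max_le (abs_nonneg _) h2')

lemma Fr_dist_le {G s3 b3 B : ℝ} (hG : 0 ≤ G) (hs3 : 0 ≤ s3)
    {x y : ℝ} (hx : x ∈ Set.Icc (0:ℝ) B) (hy : y ∈ Set.Icc (0:ℝ) B) :
    |Fr G s3 b3 x - Fr G s3 b3 y| ≤ (s3 + b3 ^ 2 * (2 * B + G * B ^ 2)) * |x - y| := by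
  obtain ⟨hx0, hxB⟩ := hx
  obtain ⟨hy0, hyB⟩ := hy
  have hB : 0 ≤ B := hx0.trans hxB
  have hdx : (1:ℝ) ≤ 1 + G * x := by nlinarith
  have hdy : (1:ℝ) ≤ 1 + G * y := by nlinarith
  have hdx0 : (1 + G * x) ≠ 0 := by linarith
  have hdy0 : (1 + G * y) ≠ 0 := by linarith
  have hrw : Fr G s3 b3 x - Fr G s3 b3 y =
      -(s3 * (x - y)) +
        b3 ^ 2 * ((x + y + G * x * y) * (x - y) / ((1 + G * x) * (1 + G * y))) := by
    simp only [Fr]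
    field_simp
    ring
  rw [hrw]
  have h1 : |(-(s3 * (x - y)))| = s3 * |x - y| := by
    rw [abs_neg, abs_mul, abs_of_nonneg hs3]
  have hnum : |x + y + G * x * y| ≤ 2 * B + G * B ^ 2 := by
    have hxy : x * y ≤ B * B := mul_le_mul hxB hyB hy0 hB
    have hGxy := mul_le_mul_of_nonneg_left hxy hG
    rw [abs_of_nonneg (by nlinarith [mul_nonneg hG (mul_nonneg hx0 hy0)])]
    nlinarith
  have hden : (1:ℝ) ≤ |(1 + G * x) * (1 + G * y)| := by
    rw [abs_of_pos (by nlinarith)]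
    nlinarith
  have h2 : |b3 ^ 2 * ((x + y + G * x * y) * (x - y) / ((1 + G * x) * (1 + G * y)))| ≤
      b3 ^ 2 * ((2 * B + G * B ^ 2) * |x - y|) := by
    rw [abs_mul, abs_of_nonneg (sq_nonneg b3), abs_div, abs_mul]
    have hstep : |x + y + G * x * y| * |x - y| / |(1 + G * x) * (1 + G * y)| ≤
        |x + y + G * x * y| * |x - y| :=
      div_le_self (by positivity) hden
    have hstep2 : |x + y + G * x * y| * |x - y| ≤ (2 * B + G * B ^ 2) * |x - y| :=
      mul_le_mul_of_nonneg_right hnum (abs_nonneg _)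
    exact mul_le_mul_of_nonneg_left (hstep.trans hstep2) (sq_nonneg b3)
  calc |(-(s3 * (x - y))) +
        b3 ^ 2 * ((x + y + G * x * y) * (x - y) / ((1 + G * x) * (1 + G * y)))|
      ≤ |(-(s3 * (x - y)))| +
        |b3 ^ 2 * ((x + y + G * x * y) * (x - y) / ((1 + G * x) * (1 + G * y)))| := abs_add_le _ _
    _ ≤ s3 * |x - y| + b3 ^ 2 * ((2 * B + G * B ^ 2) * |x - y|) := by
        rw [h1]; exact add_le_add_right h2 _
    _ = (s3 + b3 ^ 2 * (2 * B + G * B ^ 2)) * |x - y| := by ring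

lemma lipconst_nonneg {G s3 b3 B : ℝ} (hG : 0 ≤ G) (hs3 : 0 ≤ s3) (hB : 0 ≤ B) :
    0 ≤ s3 + b3 ^ 2 * (2 * B + G * B ^ 2) := by
  have : 0 ≤ 2 * B + G * B ^ 2 := by nlinarith [mul_nonneg hG (sq_nonneg B)]
  nlinarith [mul_nonneg (sq_nonneg b3) this]

lemma Fr_lipOn {G s3 b3 B : ℝ} (hG : 0 ≤ G) (hs3 : 0 ≤ s3) (hB : 0 ≤ B) :
    LipschitzOnWith (s3 + b3 ^ 2 * (2 * B + G * B ^ 2)).toNNReal (Fr G s3 b3)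
      (Set.Icc (0:ℝ) B) := by
  apply LipschitzOnWith.of_dist_le_mul
  intro x hx y hy
  rw [Real.dist_eq, Real.dist_eq, Real.coe_toNNReal _ (lipconst_nonneg hG hs3 hB)]
  exact Fr_dist_le hG hs3 hx hy

lemma Gr_lip {G s3 b3 A : ℝ} (hG : 0 ≤ G) (hs3 : 0 ≤ s3) (hA : 0 ≤ A) :
    LipschitzWith (s3 + b3 ^ 2 * (2 * A + G * A ^ 2)).toNNReal (Gr G s3 b3 A) := by
  apply LipschitzWith.of_dist_le_mul
  intro x y
  rw [Real.dist_eq, Real.dist_eq, Real.coe_toNNReal _ (lipconst_nonneg hG hs3 hA)]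
  calc |Fr G s3 b3 (clampR A x) - Fr G s3 b3 (clampR A y)|
      ≤ (s3 + b3 ^ 2 * (2 * A + G * A ^ 2)) * |clampR A x - clampR A y| :=
        Fr_dist_le hG hs3 (clampR_mem hA x) (clampR_mem hA y)
    _ ≤ (s3 + b3 ^ 2 * (2 * A + G * A ^ 2)) * |x - y| :=
        mul_le_mul_of_nonneg_left (clampR_lip A x y) (lipconst_nonneg hG hs3 hA)

lemma Gr_bound {G s3 b3 A : ℝ} (hG : 0 ≤ G) (hs3 : 0 ≤ s3) (hA : 0 ≤ A) (x : ℝ) :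
    |Gr G s3 b3 A x| ≤ s3 * A + b3 ^ 2 * A ^ 2 := by
  obtain ⟨hq0, hqA⟩ := clampR_mem hA x
  set q := clampR A x with hq
  have hd1 : (1:ℝ) ≤ 1 + G * q := by nlinarith
  have h2 : 0 ≤ b3 ^ 2 * q ^ 2 / (1 + G * q) := div_nonneg (by positivity) (by linarith)
  have h3 : b3 ^ 2 * q ^ 2 / (1 + G * q) ≤ b3 ^ 2 * q ^ 2 := div_le_self (by positivity) hd1
  have h4 : b3 ^ 2 * q ^ 2 ≤ b3 ^ 2 * A ^ 2 := by
    have hqq : q * q ≤ A * A := mul_le_mul hqA hqA hq0 hA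
    nlinarith [mul_le_mul_of_nonneg_left hqq (sq_nonneg b3)]
  have habs : |(-(s3 * q)) + b3 ^ 2 * q ^ 2 / (1 + G * q)| ≤
      |(-(s3 * q))| + |b3 ^ 2 * q ^ 2 / (1 + G * q)| := abs_add_le _ _
  rw [abs_neg, abs_mul, abs_of_nonneg hs3, abs_of_nonneg hq0, abs_of_nonneg h2] at habs
  have : Gr G s3 b3 A x = -(s3 * q) + b3 ^ 2 * q ^ 2 / (1 + G * q) := rfl
  rw [this]
  have h5 : s3 * q ≤ s3 * A := mul_le_mul_of_nonneg_left hqA hs3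
  linarith

lemma Gr_of_nonpos {G s3 b3 A x : ℝ} (hA : 0 ≤ A) (hx : x ≤ 0) : Gr G s3 b3 A x = 0 := by
  simp [Gr, clampR_of_nonpos hA hx, Fr]

lemma Gr_eq_Fr {G s3 b3 A x : ℝ} (hx : x ∈ Set.Icc (0:ℝ) A) :
    Gr G s3 b3 A x = Fr G s3 b3 x := by
  rw [Gr, clampR_eq hx]

lemma neg_Gr_le {G s3 b3 A : ℝ} (hG : 0 ≤ G) (hs3 : 0 ≤ s3) (hA : 0 ≤ A)
    {x : ℝ} (hx : 0 ≤ x) : -(Gr G s3 b3 A x) ≤ s3 * x := by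
  obtain ⟨hq0, hqA⟩ := clampR_mem hA x
  have hqx : clampR A x ≤ x := clampR_le_self hx
  set q := clampR A x with hq
  have hd1 : (1:ℝ) ≤ 1 + G * q := by nlinarith
  have h2 : 0 ≤ b3 ^ 2 * q ^ 2 / (1 + G * q) := div_nonneg (by positivity) (by linarith)
  have : Gr G s3 b3 A x = -(s3 * q) + b3 ^ 2 * q ^ 2 / (1 + G * q) := rfl
  rw [this]
  have h5 : s3 * q ≤ s3 * x := mul_le_mul_of_nonneg_left hqx hs3
  linarith

end Stmt11Aux

open Stmt11Aux

/-- the Riccati ODE `β̇ + σ²β - b₃²β²/(1 + Γβ) = 0` on `[0, T]` with terminal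
condition `β_T = c`, where `Γ = ∫_Z γ(z)² λ(dz) ≥ 0` and `c ≥ 0`, admits a unique
continuously differentiable solution satisfying `β_t ≥ 0` and `1 + Γ β_t > 0` on `[0, T]`. -/
theorem stmt11 {Z : Type*} [MeasurableSpace Z] (lam : Measure Z) (γ : Z → ℝ)
    (hγ2 : Integrable (fun z => (γ z) ^ 2) lam)
    (T σ b3 c : ℝ) (hT : 0 < T) (hc : 0 ≤ c) :
    let Γ : ℝ := ∫ z, (γ z) ^ 2 ∂lam
    ∃ β : ℝ → ℝ,
      (∀ t ∈ Set.Icc (0 : ℝ) T,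
        HasDerivAt β (-(σ ^ 2 * β t) + b3 ^ 2 * (β t) ^ 2 / (1 + Γ * β t)) t) ∧
      (ContinuousOn (fun t => -(σ ^ 2 * β t) + b3 ^ 2 * (β t) ^ 2 / (1 + Γ * β t))
        (Set.Icc (0 : ℝ) T)) ∧
      β T = c ∧
      (∀ t ∈ Set.Icc (0 : ℝ) T, 0 ≤ β t ∧ 0 < 1 + Γ * β t) ∧
      ∀ β' : ℝ → ℝ,
        (∀ t ∈ Set.Icc (0 : ℝ) T,
          HasDerivAt β' (-(σ ^ 2 * β' t) + b3 ^ 2 * (β' t) ^ 2 / (1 + Γ * β' t)) t) →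
        β' T = c →
        (∀ t ∈ Set.Icc (0 : ℝ) T, 0 ≤ β' t ∧ 0 < 1 + Γ * β' t) →
        ∀ t ∈ Set.Icc (0 : ℝ) T, β' t = β t := by
  intro Γ
  have hΓ : 0 ≤ Γ := integral_nonneg fun z => sq_nonneg (γ z)
  have hs3 : (0:ℝ) ≤ σ ^ 2 := sq_nonneg σ
  have hexpT : (0:ℝ) < Real.exp (σ ^ 2 * T) := Real.exp_pos _
  set A : ℝ := c * Real.exp (σ ^ 2 * T) + 1 with hAdef
  have hcexp : 0 ≤ c * Real.exp (σ ^ 2 * T) := mul_nonneg hc hexpT.le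
  have hA1 : (1:ℝ) ≤ A := by rw [hAdef]; linarith
  have hA0 : (0:ℝ) ≤ A := by linarith
  -- Picard-Lindelöf for the clamped field on [-1, T+1]
  have hC00 : 0 ≤ σ ^ 2 * A + b3 ^ 2 * A ^ 2 :=
    add_nonneg (mul_nonneg hs3 hA0) (mul_nonneg (sq_nonneg b3) (sq_nonneg A))
  have hpl : IsPicardLindelof (fun _ x => Gr Γ (σ ^ 2) b3 A x) (tmin := -1) (tmax := T + 1)
      ⟨T, by constructor <;> linarith⟩ c
      ((σ ^ 2 * A + b3 ^ 2 * A ^ 2) * (T + 1) + 1).toNNReal 0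
      (σ ^ 2 * A + b3 ^ 2 * A ^ 2).toNNReal
      (σ ^ 2 + b3 ^ 2 * (2 * A + Γ * A ^ 2)).toNNReal := by
    refine ⟨?_, ?_, ?_, ?_⟩
    · exact fun t _ => (Gr_lip hΓ hs3 hA0).lipschitzOnWith
    · exact fun x _ => continuousOn_const
    · intro t _ x _
      rw [Real.norm_eq_abs, Real.coe_toNNReal _ hC00]
      exact Gr_bound hΓ hs3 hA0 x
    · have h1 : T + 1 - T = (1:ℝ) := by ring
      have h2 : T - (-1) = T + 1 := by ring
      simp only [tsub_zero]
      rw [Real.coe_toNNReal _ hC00, Real.coe_toNNReal _ (by nlinarith)]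
      rw [h1, h2, max_eq_right (by linarith : (1:ℝ) ≤ T + 1)]
      rw [NNReal.coe_zero, sub_zero]
      nlinarith
  obtain ⟨β, hβT, hβ'⟩ := hpl.exists_eq_forall_mem_Icc_hasDerivWithinAt₀
  replace hβT : β T = c := hβT
  have hsub : Set.Icc (0:ℝ) T ⊆ Set.Icc (-1:ℝ) (T + 1) :=
    Set.Icc_subset_Icc (by linarith) (by linarith)
  have hd : ∀ t ∈ Set.Icc (0:ℝ) T, HasDerivAt β (Gr Γ (σ ^ 2) b3 A (β t)) t := by
    intro t ht
    exact (hβ' t (hsub ht)).hasDerivAt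
      (Icc_mem_nhds (by linarith [ht.1]) (by linarith [ht.2]))
  have hβc : ContinuousOn β (Set.Icc 0 T) :=
    fun t ht => ((hd t ht).continuousAt).continuousWithinAt
  -- nonnegativity
  have hnn : ∀ t ∈ Set.Icc (0:ℝ) T, 0 ≤ β t := by
    intro t0 ht0
    by_contra hneg
    push_neg at hneg
    have hsub2 : Set.Icc t0 T ⊆ Set.Icc (0:ℝ) T := Set.Icc_subset_Icc ht0.1 le_rfl
    have hG0 : Gr Γ (σ ^ 2) b3 A (β t0) = 0 := Gr_of_nonpos hA0 hneg.le
    have huniq : Set.EqOn β (fun _ => β t0) (Set.Icc t0 T) := by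
      apply ODE_solution_unique (v := fun _ x => Gr Γ (σ ^ 2) b3 A x)
        (fun _ => Gr_lip hΓ hs3 hA0) (hβc.mono hsub2)
        (fun t ht => (hd t (hsub2 (Set.Ico_subset_Icc_self ht))).hasDerivWithinAt)
        continuousOn_const _ rfl
      intro t _
      show HasDerivWithinAt (fun _ => β t0) (Gr Γ (σ ^ 2) b3 A (β t0)) (Set.Ici t) t
      rw [hG0]
      exact hasDerivWithinAt_const t _ (β t0)
    have hcontra : β T = β t0 := huniq ⟨ht0.2, le_rfl⟩
    rw [hβT] at hcontra
    linarith
  -- upper bound via antitone auxiliary function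
  have hub : ∀ t ∈ Set.Icc (0:ℝ) T, β t ≤ c * Real.exp (σ ^ 2 * (T - t)) := by
    set u : ℝ → ℝ := fun s => β (T - s) * Real.exp (-(σ ^ 2 * s)) with hu
    have hud : ∀ s ∈ Set.Icc (0:ℝ) T, HasDerivAt u
        ((Gr Γ (σ ^ 2) b3 A (β (T - s)) * (-1)) * Real.exp (-(σ ^ 2 * s)) +
          β (T - s) * (Real.exp (-(σ ^ 2 * s)) * (-(σ ^ 2)))) s := by
      intro s hs
      have hmem : T - s ∈ Set.Icc (0:ℝ) T := ⟨by linarith [hs.2], by linarith [hs.1]⟩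
      have h1 : HasDerivAt (fun s : ℝ => T - s) (-1) s := by
        simpa using (hasDerivAt_id s).const_sub T
      have h2 : HasDerivAt (fun s : ℝ => β (T - s))
          (Gr Γ (σ ^ 2) b3 A (β (T - s)) * (-1)) s := (hd _ hmem).comp s h1
      have h3 : HasDerivAt (fun s : ℝ => Real.exp (-(σ ^ 2 * s)))
          (Real.exp (-(σ ^ 2 * s)) * (-(σ ^ 2))) s := by
        have hinner : HasDerivAt (fun s : ℝ => -(σ ^ 2 * s)) (-(σ ^ 2)) s := by
          simpa using ((hasDerivAt_id s).const_mul (σ ^ 2)).fun_neg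
        exact hinner.exp
      exact h2.mul h3
    have hcont : ContinuousOn u (Set.Icc 0 T) :=
      fun s hs => ((hud s hs).continuousAt).continuousWithinAt
    have hanti : AntitoneOn u (Set.Icc 0 T) := by
      apply antitoneOn_of_deriv_nonpos (convex_Icc 0 T) hcont
      · intro s hs
        rw [interior_Icc] at hs
        exact ((hud s (Set.Ioo_subset_Icc_self hs)).differentiableAt).differentiableWithinAt
      · intro s hs
        rw [interior_Icc] at hs
        have hs' := Set.Ioo_subset_Icc_self hs
        rw [(hud s hs').deriv]
        have hmem : T - s ∈ Set.Icc (0:ℝ) T := ⟨by linarith [hs'.2], by linarith [hs'.1]⟩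
        have hx0 : 0 ≤ β (T - s) := hnn _ hmem
        have hkey : -(Gr Γ (σ ^ 2) b3 A (β (T - s))) ≤ σ ^ 2 * β (T - s) :=
          neg_Gr_le hΓ hs3 hA0 hx0
        have hE : 0 < Real.exp (-(σ ^ 2 * s)) := Real.exp_pos _
        have hrw : (Gr Γ (σ ^ 2) b3 A (β (T - s)) * (-1)) * Real.exp (-(σ ^ 2 * s)) +
            β (T - s) * (Real.exp (-(σ ^ 2 * s)) * (-(σ ^ 2))) =
            (-(Gr Γ (σ ^ 2) b3 A (β (T - s))) - σ ^ 2 * β (T - s)) *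
              Real.exp (-(σ ^ 2 * s)) := by ring
        rw [hrw]
        exact mul_nonpos_of_nonpos_of_nonneg (by linarith) hE.le
    intro t ht
    have h1 : u (T - t) ≤ u 0 :=
      hanti ⟨le_rfl, hT.le⟩ ⟨by linarith [ht.2], by linarith [ht.1]⟩ (by linarith [ht.2])
    have hu0 : u 0 = c := by simp [hu, hβT]
    have h2 : β t * Real.exp (-(σ ^ 2 * (T - t))) ≤ c := by
      have : u (T - t) = β t * Real.exp (-(σ ^ 2 * (T - t))) := by
        simp [hu, sub_sub_cancel]
      rw [this, hu0] at h1
      exact h1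
    have hE : (0:ℝ) < Real.exp (σ ^ 2 * (T - t)) := Real.exp_pos _
    have h3 : β t * Real.exp (-(σ ^ 2 * (T - t))) * Real.exp (σ ^ 2 * (T - t)) ≤
        c * Real.exp (σ ^ 2 * (T - t)) := mul_le_mul_of_nonneg_right h2 hE.le
    rwa [mul_assoc, ← Real.exp_add, neg_add_cancel, Real.exp_zero, mul_one] at h3
  have hmemA : ∀ t ∈ Set.Icc (0:ℝ) T, β t ∈ Set.Icc (0:ℝ) A := by
    intro t ht
    refine ⟨hnn t ht, ?_⟩
    have h1 : β t ≤ c * Real.exp (σ ^ 2 * (T - t)) := hub t ht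
    have h2 : Real.exp (σ ^ 2 * (T - t)) ≤ Real.exp (σ ^ 2 * T) := by
      apply Real.exp_le_exp.2
      nlinarith [ht.1, ht.2]
    have h3 : c * Real.exp (σ ^ 2 * (T - t)) ≤ c * Real.exp (σ ^ 2 * T) :=
      mul_le_mul_of_nonneg_left h2 hc
    rw [hAdef]; linarith
  -- the solution solves the original equation
  have hdF : ∀ t ∈ Set.Icc (0:ℝ) T,
      HasDerivAt β (-(σ ^ 2 * β t) + b3 ^ 2 * (β t) ^ 2 / (1 + Γ * β t)) t := by
    intro t ht
    have h := hd t ht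
    rwa [Gr_eq_Fr (hmemA t ht)] at h
  have hpos : ∀ t ∈ Set.Icc (0:ℝ) T, 0 ≤ β t ∧ 0 < 1 + Γ * β t := by
    intro t ht
    exact ⟨hnn t ht, by nlinarith [hnn t ht]⟩
  refine ⟨β, hdF, ?_, hβT, hpos, ?_⟩
  · -- continuity of the RHS
    apply ContinuousOn.add
    · exact (continuousOn_const.mul hβc).neg
    · exact ContinuousOn.div (continuousOn_const.mul (hβc.pow 2))
        (continuousOn_const.add (continuousOn_const.mul hβc))
        (fun t ht => ne_of_gt (hpos t ht).2)
  · -- uniqueness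
    intro β' hβ'd hβ'T hβ'pos
    have hβ'c : ContinuousOn β' (Set.Icc 0 T) :=
      fun t ht => ((hβ'd t ht).continuousAt).continuousWithinAt
    obtain ⟨tm, htm, hmax⟩ := isCompact_Icc.exists_isMaxOn
      (Set.nonempty_Icc.2 hT.le) hβ'c
    have hmax : ∀ t ∈ Set.Icc (0:ℝ) T, β' t ≤ β' tm := fun t ht => hmax ht
    set B : ℝ := max A (β' tm) with hBdef
    have hB0 : 0 ≤ B := hA0.trans (le_max_left _ _)
    have hmemB : ∀ t ∈ Set.Icc (0:ℝ) T, β t ∈ Set.Icc (0:ℝ) B :=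
      fun t ht => ⟨hnn t ht, (hmemA t ht).2.trans (le_max_left _ _)⟩
    have hmemB' : ∀ t ∈ Set.Icc (0:ℝ) T, β' t ∈ Set.Icc (0:ℝ) B :=
      fun t ht => ⟨(hβ'pos t ht).1, (hmax t ht).trans (le_max_right _ _)⟩
    have huniq : Set.EqOn β' β (Set.Icc 0 T) := by
      apply ODE_solution_unique_of_mem_Icc_left (v := fun _ x => Fr Γ (σ ^ 2) b3 x)
        (s := fun _ => Set.Icc (0:ℝ) B) (fun _ _ => Fr_lipOn hΓ hs3 hB0)
        hβ'c ?_ (fun t ht => hmemB' t (Set.Ioc_subset_Icc_self ht))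
        hβc ?_ (fun t ht => hmemB t (Set.Ioc_subset_Icc_self ht))
        (hβ'T.trans hβT.symm)
      · intro t ht
        exact (hβ'd t (Set.Ioc_subset_Icc_self ht)).hasDerivWithinAt
      · intro t ht
        exact (hdF t (Set.Ioc_subset_Icc_self ht)).hasDerivWithinAt
    exact fun t ht => huniq ht
end

section
/- Fix constants $a > 0$ and $\Gamma \ge 0$, and let $X$ be a square-integrable real random variable on a probability space, with $b_2, b_3 \in \mathbb{R}$ and $\beta, \eta \in \mathbb{R}$ satisfying $1 + \Gamma\beta > 0$ and $1 + \Gamma(\beta+\eta) > 0$. Consider the functional over $\alpha \in L^2(\Omega;\mathbb{R})$: $F(\alpha) = \frac{1}{2}(1 + \Gamma\beta)\,\mathbb{E}[\alpha^2] + \frac{\Gamma\eta}{2}(\mathbb{E}[\alpha])^2 + \beta\, b_3\, \mathbb{E}[\alpha X] + \big( \beta b_2 + \eta(b_2 + b_3) \big)\,\mathbb{E}[\alpha]\,\mathbb{E}[X]$. Then $F$ has the unique minimizer $\alpha^* = -\frac{(b_2+b_3)(\beta+\eta)}{1 + \Gamma(\beta+\eta)}\,\mathbb{E}[X] - \frac{b_3\beta}{1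 + \Gamma\beta}\,(X - \mathbb{E}[X])$. -/
open MeasureTheory

section Aux
set_option linter.unusedSectionVars false
variable {Ω : Type*} [MeasurableSpace Ω] {P : Measure Ω} [IsProbabilityMeasure P]

lemma l2_mul_int {f g : Ω → ℝ} (hf : MemLp f 2 P) (hg : MemLp g 2 P) :
    Integrable (fun ω => f ω * g ω) P := by
  have h : (fun ω => f ω * g ω)
      = fun ω => (((f ω + g ω) ^ 2 - f ω ^ 2) - g ω ^ 2) / 2 := by funext ω; ring
  rw [h]
  exact (((hf.add hg).integrable_sq.sub hf.integrable_sq).sub hg.integrable_sq).div_const 2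

lemma int_mul_affine {X f : Ω → ℝ} (hX : MemLp X 2 P) (hf : MemLp f 2 P) (c0 c1 : ℝ) :
    ∫ ω, f ω * (c0 + c1 * X ω) ∂P
      = c0 * ∫ ω, f ω ∂P + c1 * ∫ ω, f ω * X ω ∂P := by
  have h : (fun ω => f ω * (c0 + c1 * X ω))
      = fun ω => c0 * f ω + c1 * (f ω * X ω) := by funext ω; ring
  have i1 : Integrable (fun ω => c0 * f ω) P := (hf.integrable one_le_two).const_mul c0
  have i2 : Integrable (fun ω => c1 * (f ω * X ω)) P := (l2_mul_int hf hX).const_mul c1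
  rw [h, integral_add i1 i2, integral_const_mul, integral_const_mul]

lemma int_affine {X : Ω → ℝ} (hX : MemLp X 2 P) (c0 c1 : ℝ) :
    ∫ ω, (c0 + c1 * X ω) ∂P = c0 + c1 * ∫ ω, X ω ∂P := by
  have i2 : Integrable (fun ω => c1 * X ω) P := (hX.integrable one_le_two).const_mul c1
  rw [integral_add (integrable_const c0) i2, integral_const, integral_const_mul]
  simp

lemma int_sub_sq {f g : Ω → ℝ} (hf : MemLp f 2 P) (hg : MemLp g 2 P) :
    ∫ ω, (f ω - g ω) ^ 2 ∂P
      = (∫ ω, f ω ^ 2 ∂P) - 2 * (∫ ω, f ω * g ω ∂P) + ∫ ω, g ω ^ 2 ∂P := by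
  have h : (fun ω => (f ω - g ω) ^ 2)
      = fun ω => (f ω ^ 2 - 2 * (f ω * g ω)) + g ω ^ 2 := by funext ω; ring
  have i2 : Integrable (fun ω => 2 * (f ω * g ω)) P := (l2_mul_int hf hg).const_mul 2
  have i1 : Integrable (fun ω => f ω ^ 2 - 2 * (f ω * g ω)) P := hf.integrable_sq.sub i2
  rw [h, integral_add i1 hg.integrable_sq, integral_sub hf.integrable_sq i2,
    integral_const_mul]

lemma sq_int_le {h : Ω → ℝ} (hh : MemLp h 2 P) :
    (∫ ω, h ω ∂P) ^ 2 ≤ ∫ ω, (h ω) ^ 2 ∂P := by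
  have h0 : (0:ℝ) ≤ ∫ ω, (h ω - ∫ ω', h ω' ∂P) ^ 2 ∂P :=
    integral_nonneg fun ω => sq_nonneg _
  have he := int_sub_sq hh (memLp_const (μ := P) (∫ ω', h ω' ∂P))
  rw [integral_mul_const, integral_const] at he
  simp only [measure_univ, probReal_univ, ENNReal.toReal_one, one_smul, smul_eq_mul] at he
  nlinarith [he, h0]

end Aux

set_option maxHeartbeats 1000000 in
/-- the pointwise minimization in the HJB equation of the linear-quadratic
extended mean-field control problem with Poissonian common noise: the functional
`F(α) = ½(1+Γβ) E[α²] + (Γη/2)(E[α])² + β b₃ E[αX] + (β b₂ + η(b₂+b₃)) E[α] E[X]`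
over `L²` has the unique minimizer
`α* = -((b₂+b₃)(β+η)/(1+Γ(β+η))) E[X] - (b₃β/(1+Γβ))(X - E[X])`. -/
theorem stmt17 {Ω : Type*} [MeasurableSpace Ω] (P : Measure Ω) [IsProbabilityMeasure P]
    (Γ : ℝ) (hΓ : 0 ≤ Γ) (b2 b3 β η : ℝ)
    (hβ : 0 < 1 + Γ * β) (hβη : 0 < 1 + Γ * (β + η))
    (X : Ω → ℝ) (hX : MemLp X 2 P) :
    let EX : ℝ := ∫ ω, X ω ∂P
    let F : (Ω → ℝ) → ℝ := fun α =>
      (1 + Γ * β) / 2 * (∫ ω, (α ω) ^ 2 ∂P) + Γ * η / 2 * (∫ ω, α ω ∂P) ^ 2 +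
        β * b3 * (∫ ω, α ω * X ω ∂P) +
        (β * b2 + η * (b2 + b3)) * (∫ ω, α ω ∂P) * EX
    let αstar : Ω → ℝ := fun ω =>
      -((b2 + b3) * (β + η) / (1 + Γ * (β + η))) * EX -
        (b3 * β / (1 + Γ * β)) * (X ω - EX)
    (∀ α : Ω → ℝ, MemLp α 2 P → F αstar ≤ F α) ∧
    (∀ α : Ω → ℝ, MemLp α 2 P → F α = F αstar → α =ᵐ[P] αstar) := by
  intro EX F αstar
  set c1 : ℝ := -(b3 * β / (1 + Γ * β)) with hc1
  set c0 : ℝ := -((b2 + b3) * (β + η) / (1 + Γ * (β + η))) * EX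
      + (b3 * β / (1 + Γ * β)) * EX with hc0
  have hαs : αstar = fun ω => c0 + c1 * X ω := by
    funext ω; show _ - _ = _; rw [hc0, hc1]; ring
  have hαsm : MemLp αstar 2 P := by
    rw [hαs]; exact (memLp_const c0).add (hX.const_mul c1)
  set EX2 : ℝ := ∫ ω, (X ω) ^ 2 ∂P with hEX2d
  have hXX : ∫ ω, X ω * X ω ∂P = EX2 :=
    integral_congr_ae (Filter.Eventually.of_forall fun ω => (pow_two (X ω)).symm)
  -- integrals of αstar
  have hI0 : ∫ ω, αstar ω ∂P = c0 + c1 * EX := by rw [hαs]; exact int_affine hX c0 c1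
  have hIX : ∫ ω, αstar ω * X ω ∂P = c0 * EX + c1 * EX2 := by
    have h : (fun ω => αstar ω * X ω) = fun ω => X ω * (c0 + c1 * X ω) := by
      rw [hαs]; funext ω; ring
    rw [h, int_mul_affine hX hX, hXX]
  have hI2 : ∫ ω, (αstar ω) ^ 2 ∂P
      = c0 * (c0 + c1 * EX) + c1 * (c0 * EX + c1 * EX2) := by
    have h : (fun ω => (αstar ω) ^ 2) = fun ω => αstar ω * (c0 + c1 * X ω) := by
      rw [hαs]; funext ω; ring
    rw [h, int_mul_affine hX hαsm, hI0, hIX]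
  -- key identity
  have key : ∀ α : Ω → ℝ, MemLp α 2 P →
      F α = F αstar + (1 + Γ * β) / 2 * (∫ ω, (α ω - αstar ω) ^ 2 ∂P)
        + Γ * η / 2 * (∫ ω, (α ω - αstar ω) ∂P) ^ 2 := by
    intro α hα
    have hIαs : ∫ ω, α ω * αstar ω ∂P
        = c0 * ∫ ω, α ω ∂P + c1 * ∫ ω, α ω * X ω ∂P := by
      have h : (fun ω => α ω * αstar ω) = fun ω => α ω * (c0 + c1 * X ω) := by
        rw [hαs]
      rw [h]
      exact int_mul_affine hX hα c0 c1
    have hH0 : ∫ ω, (α ω - αstar ω) ∂P = (∫ ω, α ω ∂P) - (c0 + c1 * EX) := by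
      rw [integral_sub (hα.integrable one_le_two) (hαsm.integrable one_le_two), hI0]
    have hH2 := int_sub_sq hα hαsm
    have hF : ∀ g : Ω → ℝ, F g = (1 + Γ * β) / 2 * (∫ ω, (g ω) ^ 2 ∂P)
        + Γ * η / 2 * (∫ ω, g ω ∂P) ^ 2 + β * b3 * (∫ ω, g ω * X ω ∂P)
        + (β * b2 + η * (b2 + b3)) * (∫ ω, g ω ∂P) * EX := fun g => rfl
    have R1 : (1 + Γ * β) * c1 = -(b3 * β) := by
      rw [hc1]; field_simp
    have R2 : (1 + Γ * (β + η)) * (c0 + c1 * EX) = -((b2 + b3) * (β + η)) * EX := by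
      rw [hc0, hc1]; field_simp; ring
    rw [hF α, hF αstar, hH2, hH0, hIαs, hI0, hIX, hI2]
    linear_combination ((∫ ω, α ω * X ω ∂P) - (c0 * EX + c1 * EX2)) * R1 +
      ((∫ ω, α ω ∂P) - (c0 + c1 * EX)) * (R2 - EX * R1)
  have ha : (0:ℝ) < (1 + Γ * β) / 2 := by linarith
  have hac : (0:ℝ) < (1 + Γ * β) / 2 + Γ * η / 2 := by
    have : 1 + Γ * (β + η) = (1 + Γ * β) + Γ * η := by ring
    linarith [hβη]
  constructor
  · intro α hα
    rw [key α hα]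
    have hhm : MemLp (fun ω => α ω - αstar ω) 2 P := hα.sub hαsm
    have hcs := sq_int_le hhm
    nlinarith [sq_nonneg (∫ ω, (α ω - αstar ω) ∂P), hcs]
  · intro α hα hFeq
    have hk := key α hα
    rw [hFeq] at hk
    have hhm : MemLp (fun ω => α ω - αstar ω) 2 P := hα.sub hαsm
    have hcs := sq_int_le hhm
    set H2 := ∫ ω, (α ω - αstar ω) ^ 2 ∂P with hH2d
    set H0 := ∫ ω, (α ω - αstar ω) ∂P with hH0d
    have hH2nn : (0:ℝ) ≤ H2 := integral_nonneg fun ω => sq_nonneg _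
    have hH0sq : H0 ^ 2 = 0 := by
      refine le_antisymm ?_ (sq_nonneg _)
      nlinarith [hk, hcs, mul_nonneg ha.le (sub_nonneg.2 hcs)]
    have hH2z : H2 = 0 := by
      refine le_antisymm ?_ hH2nn
      nlinarith [hk, hH0sq]
    have hae : (fun ω => (α ω - αstar ω) ^ 2) =ᵐ[P] 0 := by
      refine (integral_eq_zero_iff_of_nonneg (fun ω => sq_nonneg _) hhm.integrable_sq).mp ?_
      exact hH2z
    filter_upwards [hae] with ω hω
    have : (α ω - αstar ω) ^ 2 = 0 := hω
    have := pow_eq_zero_iff (n := 2) (by norm_num) |>.mp this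
    linarith [this]
end
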